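/- Let n ≥ 1, let E be a real Banach space, let g : Δ_n → E be continuous, and let φ : [0,1] → [0,1] be a monotone nondecreasing continuously differentiable function with φ(0) = 0 and φ(1) = 1. Then ∫_{Δ_n} g(φ(t_1), …, φ(t_n)) · φ′(t_1)⋯φ′(t_n) dt_1⋯dt_n = ∫_{Δ_n} g(t_1,…,t_n) dt_1⋯dt_n, where both sides are Bochner integrals with respect to Lebesgue measure on Δ_n ⊂ ℝ^n. (This is the invariance of simplex integrals under reparametrization, which underlies the reparametrization invariance of differential forms in the image of Chen's map.) -/

import Mathlib

noncomputable section
open MeasureTheory Set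

/-- The simplex `Δ_n = {t ∈ ℝ^n : 1 ≥ t_1 ≥ t_2 ≥ … ≥ t_n ≥ 0}`. -/
def ordSimplex (n : ℕ) : Set (Fin n → ℝ) :=
  {t | (∀ i, 0 ≤ t i) ∧ (∀ i, t i ≤ 1) ∧ ∀ i j : Fin n, i ≤ j → t j ≤ t i}

section aux

open Filter ContinuousLinearMap

lemma detDiagAux (n : ℕ) (a : Fin n → ℝ) :
    (ContinuousLinearMap.pi fun i => a i •
      ContinuousLinearMap.proj (R := ℝ) (φ := fun _ : Fin n => ℝ) i).det = ∏ i, a i := by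
  have : ((ContinuousLinearMap.pi fun i => a i •
      ContinuousLinearMap.proj (R := ℝ) (φ := fun _ : Fin n => ℝ) i) :
        (Fin n → ℝ) →ₗ[ℝ] (Fin n → ℝ)).det = ∏ i, a i := by
    rw [← LinearMap.det_toMatrix (Pi.basisFun ℝ (Fin n))]
    have h : (LinearMap.toMatrix (Pi.basisFun ℝ (Fin n)) (Pi.basisFun ℝ (Fin n))
        ((ContinuousLinearMap.pi fun i => a i •
          ContinuousLinearMap.proj (R := ℝ) (φ := fun _ : Fin n => ℝ) i) :
            (Fin n → ℝ) →ₗ[ℝ] (Fin n → ℝ))) = Matrix.diagonal a := by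
      ext i j
      simp [LinearMap.toMatrix_apply, Matrix.diagonal, Pi.single_apply, eq_comm]
    rw [h, Matrix.det_diagonal]
  exact this

lemma phi'_nonnegAux {φ φ' : ℝ → ℝ} (hmono : MonotoneOn φ (Set.Icc 0 1))
    (hderiv : ∀ t ∈ Set.Icc (0 : ℝ) 1, HasDerivWithinAt φ (φ' t) (Set.Icc 0 1) t)
    {x : ℝ} (hx : x ∈ Set.Ico (0:ℝ) 1) : 0 ≤ φ' x := by
  have h := (hderiv x ⟨hx.1, hx.2.le⟩)
  rw [hasDerivWithinAt_iff_tendsto_slope] at h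
  have hsub : Set.Ioc x 1 ⊆ Set.Icc 0 1 \ {x} := fun y hy =>
    ⟨⟨hx.1.trans hy.1.le, hy.2⟩, hy.1.ne'⟩
  have h2 : Tendsto (slope φ x) (nhdsWithin x (Set.Ioc x 1)) (nhds (φ' x)) :=
    h.mono_left (nhdsWithin_mono _ hsub)
  have : NeBot (nhdsWithin x (Set.Ioc x 1)) := left_nhdsWithin_Ioc_neBot hx.2
  refine ge_of_tendsto h2 ?_
  filter_upwards [self_mem_nhdsWithin] with y hy
  rw [slope_def_field]
  have : φ x ≤ φ y := hmono ⟨hx.1, hx.2.le⟩ ⟨hx.1.trans hy.1.le, hy.2⟩ hy.1.le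
  exact div_nonneg (by linarith) (by linarith [hy.1])

lemma phi_injAux {φ φ' : ℝ → ℝ} (hmono : MonotoneOn φ (Set.Icc 0 1))
    (hderiv : ∀ t ∈ Set.Icc (0 : ℝ) 1, HasDerivWithinAt φ (φ' t) (Set.Icc 0 1) t)
    {x y : ℝ} (hx : x ∈ Set.Icc (0:ℝ) 1) (hy : y ∈ Set.Icc (0:ℝ) 1)
    (hx' : 0 < φ' x) (hxy : x < y) (heq : φ x = φ y) : False := by
  have hconst : ∀ z ∈ Set.Icc x y, φ z = φ x := by
    intro z hz
    have h1 : φ x ≤ φ z := hmono hx ⟨hx.1.trans hz.1, hz.2.trans hy.2⟩ hz.1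
    have h2 : φ z ≤ φ y := hmono ⟨hx.1.trans hz.1, hz.2.trans hy.2⟩ hy hz.2
    linarith [heq ▸ h2]
  have hd : HasDerivWithinAt φ (φ' x) (Set.Icc x y) x :=
    (hderiv x hx).mono (Set.Icc_subset_Icc hx.1 hy.2)
  have hd0 : HasDerivWithinAt φ 0 (Set.Icc x y) x := by
    refine (hasDerivWithinAt_const x (Set.Icc x y) (φ x)).congr hconst (hconst x ?_)
    exact ⟨le_refl x, hxy.le⟩
  have hu : UniqueDiffWithinAt ℝ (Set.Icc x y) x := (uniqueDiffOn_Icc hxy) x ⟨le_refl x, hxy.le⟩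
  linarith [hd.derivWithin hu, hd0.derivWithin hu]

lemma hasFDeriv_phiMapAux {n : ℕ} {φ φ' : ℝ → ℝ}
    (hderiv : ∀ t ∈ Set.Icc (0 : ℝ) 1, HasDerivWithinAt φ (φ' t) (Set.Icc 0 1) t)
    {T : Set (Fin n → ℝ)} (hT : ∀ t ∈ T, ∀ i, t i ∈ Set.Icc (0:ℝ) 1)
    {x : Fin n → ℝ} (hx : x ∈ T) :
    HasFDerivWithinAt (fun t (i : Fin n) => φ (t i))
      (ContinuousLinearMap.pi fun i => φ' (x i) •
        ContinuousLinearMap.proj (R := ℝ) (φ := fun _ : Fin n => ℝ) i) T x := by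
  apply hasFDerivWithinAt_pi''
  intro i
  have h1 : HasDerivWithinAt φ (φ' (x i)) (Set.Icc 0 1) (x i) := hderiv (x i) (hT x hx i)
  have h2 : HasFDerivWithinAt (fun t : Fin n → ℝ => t i)
      (ContinuousLinearMap.proj (R := ℝ) (φ := fun _ : Fin n => ℝ) i) T x :=
    (hasFDerivWithinAt_apply i x T)
  have h3 := h1.comp_hasFDerivWithinAt x h2 (fun t ht => hT t ht i)
  have heq : (ContinuousLinearMap.proj (R := ℝ) (φ := fun _ : Fin n => ℝ) i).comp
      (ContinuousLinearMap.pi fun i => φ' (x i) •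
        ContinuousLinearMap.proj (R := ℝ) (φ := fun _ : Fin n => ℝ) i)
      = φ' (x i) • ContinuousLinearMap.proj (R := ℝ) (φ := fun _ : Fin n => ℝ) i := by
    ext v; simp
  rw [heq]
  exact h3

lemma phi_surjAux {n : ℕ} {φ φ' : ℝ → ℝ} (hmono : MonotoneOn φ (Set.Icc 0 1))
    (hderiv : ∀ t ∈ Set.Icc (0 : ℝ) 1, HasDerivWithinAt φ (φ' t) (Set.Icc 0 1) t)
    (h0 : φ 0 = 0) (h1 : φ 1 = 1)
    {t : Fin n → ℝ} (ht0 : ∀ i, 0 ≤ t i) (ht1 : ∀ i, t i ≤ 1)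
    (hord : ∀ i j : Fin n, i ≤ j → t j ≤ t i) :
    ∃ u : Fin n → ℝ, (∀ i, 0 ≤ u i) ∧ (∀ i, u i ≤ 1) ∧ (∀ i j : Fin n, i ≤ j → u j ≤ u i)
      ∧ ∀ i, φ (u i) = t i := by
  have hφc : ContinuousOn φ (Set.Icc 0 1) := fun x hx => (hderiv x hx).continuousWithinAt
  set P : ℝ → Set ℝ := fun c => Set.Icc 0 1 ∩ φ ⁻¹' {c} with hP
  have hPne : ∀ c ∈ Set.Icc (0:ℝ) 1, (P c).Nonempty := by
    intro c hc
    have := intermediate_value_Icc (by norm_num : (0:ℝ) ≤ 1) hφc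
    rw [h0, h1] at this
    obtain ⟨x, hx, hfx⟩ := this hc
    exact ⟨x, hx, hfx⟩
  have hPcl : ∀ c, IsClosed (P c) := fun c =>
    hφc.preimage_isClosed_of_isClosed isClosed_Icc isClosed_singleton
  have hPbdd : ∀ c, BddBelow (P c) := fun c => (bddBelow_Icc).mono (Set.inter_subset_left)
  set u : Fin n → ℝ := fun i => sInf (P (t i)) with hu
  have humem : ∀ i, u i ∈ P (t i) := fun i =>
    (hPcl (t i)).csInf_mem (hPne (t i) ⟨ht0 i, ht1 i⟩) (hPbdd (t i))
  refine ⟨u, fun i => (humem i).1.1, fun i => (humem i).1.2, ?_, fun i => (humem i).2⟩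
  intro i j hij
  have hti : φ (u i) = t i := (humem i).2
  have hIVT := intermediate_value_Icc (humem i).1.1
    (hφc.mono (Set.Icc_subset_Icc le_rfl (humem i).1.2))
  have hmem : t j ∈ Set.Icc (φ 0) (φ (u i)) :=
    ⟨by rw [h0]; exact ht0 j, by rw [hti]; exact hord i j hij⟩
  obtain ⟨x, hx, hfx⟩ := hIVT hmem
  have : x ∈ P (t j) := ⟨⟨hx.1, hx.2.trans (humem i).1.2⟩, hfx⟩
  exact (csInf_le (hPbdd (t j)) this).trans hx.2

end aux

/-- Invariance of simplex integrals under reparametrization: if `φ : [0,1] → [0,1]` is monotone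
nondecreasing, continuously differentiable (with derivative `φ'` on `[0,1]`) and fixes the
endpoints, then for every continuous `g : Δ_n → E` (Banach-valued),
`∫_{Δ_n} g(φ(t_1),…,φ(t_n)) φ'(t_1)⋯φ'(t_n) dt = ∫_{Δ_n} g(t) dt`. -/
theorem stmt7 (n : ℕ) (hn : 1 ≤ n) {E : Type*} [NormedAddCommGroup E] [NormedSpace ℝ E]
    [CompleteSpace E]
    (g : (Fin n → ℝ) → E) (hg : ContinuousOn g (ordSimplex n))
    (φ φ' : ℝ → ℝ)
    (hmono : MonotoneOn φ (Set.Icc 0 1))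
    (hderiv : ∀ t ∈ Set.Icc (0 : ℝ) 1, HasDerivWithinAt φ (φ' t) (Set.Icc 0 1) t)
    (hcont : ContinuousOn φ' (Set.Icc 0 1))
    (h0 : φ 0 = 0) (h1 : φ 1 = 1) :
    ∫ t in ordSimplex n, (∏ i : Fin n, φ' (t i)) • g (fun i => φ (t i))
      = ∫ t in ordSimplex n, g t := by
  classical
  set Φ : (Fin n → ℝ) → (Fin n → ℝ) := fun t i => φ (t i) with hΦ
  set D : (Fin n → ℝ) → (Fin n → ℝ) →L[ℝ] (Fin n → ℝ) :=
    fun x => ContinuousLinearMap.pi fun i => φ' (x i) •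
      ContinuousLinearMap.proj (R := ℝ) (φ := fun _ : Fin n => ℝ) i with hD
  have hdet : ∀ x : Fin n → ℝ, (D x).det = ∏ i, φ' (x i) := fun x =>
    detDiagAux n fun i => φ' (x i)
  -- measurability of the simplex
  have hΔcl : IsClosed (ordSimplex n) := by
    have : ordSimplex n = (⋂ i, {t : Fin n → ℝ | 0 ≤ t i}) ∩
        ((⋂ i, {t : Fin n → ℝ | t i ≤ 1}) ∩
          ⋂ (i : Fin n) (j : Fin n), {t : Fin n → ℝ | i ≤ j → t j ≤ t i}) := by
      ext t
      simp only [ordSimplex, Set.mem_setOf_eq, Set.mem_inter_iff, Set.mem_iInter]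
    rw [this]
    refine (isClosed_iInter fun i => isClosed_le continuous_const (continuous_apply i)).inter
      ((isClosed_iInter fun i => isClosed_le (continuous_apply i) continuous_const).inter
        (isClosed_iInter fun i => isClosed_iInter fun j => ?_))
    by_cases hij : i ≤ j
    · have : {t : Fin n → ℝ | i ≤ j → t j ≤ t i} = {t : Fin n → ℝ | t j ≤ t i} := by
        ext t; simp [hij]
      rw [this]
      exact isClosed_le (continuous_apply j) (continuous_apply i)
    · have : {t : Fin n → ℝ | i ≤ j → t j ≤ t i} = Set.univ := by
        ext t; simp [hij]
      rw [this]; exact isClosed_univ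
  have hΔ : MeasurableSet (ordSimplex n) := hΔcl.measurableSet
  -- the good open set
  set U : Set ℝ := Set.Ioo 0 1 ∩ φ' ⁻¹' Set.Ioi 0 with hUdef
  have hUopen : IsOpen U :=
    (hcont.mono Set.Ioo_subset_Icc_self).isOpen_inter_preimage isOpen_Ioo isOpen_Ioi
  set s : Set (Fin n → ℝ) := ordSimplex n ∩ Set.univ.pi (fun _ => U) with hsdef
  have hsmeas : MeasurableSet s :=
    hΔ.inter (isOpen_set_pi Set.finite_univ (fun i _ => hUopen)).measurableSet
  have hsU : ∀ x ∈ s, ∀ i, x i ∈ U := fun x hx i => hx.2 i (Set.mem_univ i)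
  -- a.e. coordinates avoid 0 and 1
  have haecoord : ∀ᵐ t : Fin n → ℝ, ∀ i : Fin n, t i ≠ 0 ∧ t i ≠ 1 := by
    rw [ae_all_iff]
    intro i
    have hv : (volume : Measure (Fin n → ℝ)) = Measure.pi fun _ => volume := volume_pi
    rw [hv]
    exact (Measure.ae_eval_ne (fun _ : Fin n => (volume : Measure ℝ)) i 0).and
      (Measure.ae_eval_ne (fun _ : Fin n => (volume : Measure ℝ)) i 1)
  -- off s (away from the boundary), some φ' (t i) vanishes
  have hzero : ∀ t ∈ ordSimplex n, (∀ i : Fin n, t i ≠ 0 ∧ t i ≠ 1) → t ∉ s →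
      ∃ i, φ' (t i) = 0 := by
    intro t ht hne hts
    have hnotall : ¬ ∀ i : Fin n, t i ∈ U := fun h =>
      hts ⟨ht, fun i _ => h i⟩
    push_neg at hnotall
    obtain ⟨i, hi⟩ := hnotall
    have hio : t i ∈ Set.Ioo (0:ℝ) 1 :=
      ⟨lt_of_le_of_ne (ht.1 i) (Ne.symm (hne i).1), lt_of_le_of_ne (ht.2.1 i) (hne i).2⟩
    have hnpos : ¬ (0 < φ' (t i)) := fun h => hi ⟨hio, h⟩
    exact ⟨i, le_antisymm (not_lt.1 hnpos)
      (phi'_nonnegAux hmono hderiv ⟨ht.1 i, hio.2⟩)⟩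
  -- Φ maps the simplex into itself
  have hmaps : ∀ x ∈ ordSimplex n, Φ x ∈ ordSimplex n := by
    intro x hx
    refine ⟨fun i => by
        rw [← h0]; exact hmono ⟨le_refl 0, by norm_num⟩ ⟨hx.1 i, hx.2.1 i⟩ (hx.1 i),
      fun i => by
        rw [← h1]; exact hmono ⟨hx.1 i, hx.2.1 i⟩ ⟨by norm_num, le_refl 1⟩ (hx.2.1 i),
      fun i j hij => hmono ⟨hx.1 j, hx.2.1 j⟩ ⟨hx.1 i, hx.2.1 i⟩ (hx.2.2 i j hij)⟩
  -- injectivity on s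
  have hinj : Set.InjOn Φ s := by
    intro a ha b hb hab
    funext i
    have h := congrFun hab i
    simp only [hΦ] at h
    rcases lt_trichotomy (a i) (b i) with h1'|h1'|h1'
    · exact absurd (phi_injAux hmono hderiv ⟨ha.1.1 i, ha.1.2.1 i⟩ ⟨hb.1.1 i, hb.1.2.1 i⟩
        (hsU a ha i).2 h1' h) not_false
    · exact h1'
    · exact absurd (phi_injAux hmono hderiv ⟨hb.1.1 i, hb.1.2.1 i⟩ ⟨ha.1.1 i, ha.1.2.1 i⟩
        (hsU b hb i).2 h1' h.symm) not_false
  -- derivative of Φ within s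
  have hF's : ∀ x ∈ s, HasFDerivWithinAt Φ (D x) s x := fun x hx =>
    hasFDeriv_phiMapAux hderiv (fun t ht i => ⟨ht.1.1 i, ht.1.2.1 i⟩) hx
  -- the bad set has null image
  have hW : MeasurableSet (ordSimplex n \ s) := hΔ.diff hsmeas
  have hWd : ∀ x ∈ ordSimplex n \ s, HasFDerivWithinAt Φ (D x) (ordSimplex n \ s) x :=
    fun x hx => hasFDeriv_phiMapAux hderiv (fun t ht i => ⟨ht.1.1 i, ht.1.2.1 i⟩) hx
  have himg_null : volume (Φ '' (ordSimplex n \ s)) = 0 := by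
    refine le_antisymm ?_ zero_le
    calc volume (Φ '' (ordSimplex n \ s))
        ≤ ∫⁻ x in ordSimplex n \ s, ENNReal.ofReal |(D x).det| :=
          addHaar_image_le_lintegral_abs_det_fderiv volume hW hWd
      _ = 0 := by
          have hae : ∀ᵐ x ∂(volume.restrict (ordSimplex n \ s)),
              ENNReal.ofReal |(D x).det| = 0 := by
            filter_upwards [ae_restrict_mem hW, ae_restrict_of_ae haecoord] with x hxW hxc
            obtain ⟨i, hi⟩ := hzero x hxW.1 hxc hxW.2
            have hd0 : (D x).det = 0 := by
              rw [hdet]; exact Finset.prod_eq_zero (Finset.mem_univ i) hi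
            simp [hd0]
          rw [lintegral_congr_ae hae, lintegral_zero]
  -- Φ '' s is a.e. equal to the simplex
  have himage_ae : Φ '' s =ᵐ[volume] ordSimplex n := by
    rw [MeasureTheory.ae_eq_set]
    constructor
    · have hsub : Φ '' s ⊆ ordSimplex n := by
        rintro y ⟨x, hx, rfl⟩
        exact hmaps x hx.1
      rw [Set.diff_eq_empty.2 hsub]
      exact measure_empty
    · refine measure_mono_null ?_ himg_null
      rintro t ⟨htΔ, hts⟩
      obtain ⟨u, hu0, hu1, huord, huφ⟩ := phi_surjAux hmono hderiv h0 h1 htΔ.1 htΔ.2.1 htΔ.2.2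
      have huΔ : u ∈ ordSimplex n := ⟨hu0, hu1, huord⟩
      have hΦu : Φ u = t := funext huφ
      exact ⟨u, ⟨huΔ, fun hus => hts (hΦu ▸ Set.mem_image_of_mem Φ hus)⟩, hΦu⟩
  -- restrict the left-hand integral to s
  have key1 : ∫ t in ordSimplex n, (∏ i, φ' (t i)) • g (Φ t)
      = ∫ t in s, (∏ i, φ' (t i)) • g (Φ t) := by
    rw [← integral_indicator hΔ, ← integral_indicator hsmeas]
    refine integral_congr_ae ?_
    filter_upwards [haecoord] with t htc
    by_cases hts : t ∈ s
    · rw [Set.indicator_of_mem hts, Set.indicator_of_mem hts.1]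
    · rw [Set.indicator_of_notMem hts]
      by_cases htΔ : t ∈ ordSimplex n
      · rw [Set.indicator_of_mem htΔ]
        obtain ⟨i, hi⟩ := hzero t htΔ htc hts
        rw [Finset.prod_eq_zero (Finset.mem_univ i) hi, zero_smul]
      · rw [Set.indicator_of_notMem htΔ]
  calc ∫ t in ordSimplex n, (∏ i : Fin n, φ' (t i)) • g (fun i => φ (t i))
      = ∫ t in s, (∏ i, φ' (t i)) • g (Φ t) := key1
    _ = ∫ t in s, |(D t).det| • g (Φ t) := by
        refine setIntegral_congr_fun hsmeas (fun x hx => ?_)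
        rw [hdet, abs_of_nonneg (Finset.prod_nonneg fun i _ => (hsU x hx i).2.le)]
    _ = ∫ t in Φ '' s, g t :=
        (integral_image_eq_integral_abs_det_fderiv_smul volume hsmeas hF's hinj g).symm
    _ = ∫ t in ordSimplex n, g t := setIntegral_congr_set himage_ae
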